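/- (Bivariate Graeffe step for power projection) Let P(x,y), Q(x,y) ∈ A[x,y] with Q(0,0) = 1 and n ≥ 2. Let U(x,y) = P(x,y)Q(-x,y), and V(x,y) be defined by V(x²,y) = Q(x,y)Q(-x,y) considered in A[[x]][y-direction truncated mod y^m]. Then [x^{n-1}](P(x,y)/Q(x,y)) mod y^m equals [x^{⌈n/2⌉-1}](U_e(x,y)/V(x,y)) mod y^m if n-1 is even, and [x^{⌈n/2⌉-1}](U_o(x,y)/V(x,y)) mod y^m if n-1 is odd, where U(x,y) = U_e(x²,y) + x·U_o(x²,y). -/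

import Mathlib

/-- Even part: `Σ_i ([x^{2i}]U) x^i`. -/
noncomputable def evenPart {R : Type*} [CommRing R] (U : PowerSeries R) : PowerSeries R :=
  PowerSeries.mk fun n => PowerSeries.coeff (R := R) (2 * n) U

/-- Odd part: `Σ_i ([x^{2i+1}]U) x^i`. -/
noncomputable def oddPart {R : Type*} [CommRing R] (U : PowerSeries R) : PowerSeries R :=
  PowerSeries.mk fun n => PowerSeries.coeff (R := R) (2 * n + 1) U

/-- View a bivariate polynomial (outer variable `x`, inner variable `y`) as an element
of `(A⟦y⟧)⟦x⟧`. -/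
noncomputable def toSer {A : Type*} [CommRing A] (Q : Polynomial (Polynomial A)) :
    PowerSeries (PowerSeries A) :=
  PowerSeries.mk fun i => ((Q.coeff i : Polynomial A) : PowerSeries A)

section Aux

open Finset

variable {R : Type*} [CommRing R]

/-- Substitution `x ↦ x²`: coefficients spread to even positions. -/
noncomputable def sqSub (f : PowerSeries R) : PowerSeries R :=
  PowerSeries.mk fun n => if n % 2 = 0 then PowerSeries.coeff (R := R) (n / 2) f else 0

lemma coeff_sqSub_even (f : PowerSeries R) (k : ℕ) :
    PowerSeries.coeff (R := R) (2 * k) (sqSub f) = PowerSeries.coeff (R := R) k f := by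
  simp [sqSub, Nat.mul_mod_right, Nat.mul_div_cancel_left k two_pos]

lemma coeff_sqSub_odd (f : PowerSeries R) (k : ℕ) :
    PowerSeries.coeff (R := R) (2 * k + 1) (sqSub f) = 0 := by
  simp only [sqSub, PowerSeries.coeff_mk, ite_eq_right_iff]
  intro h
  omega

lemma sqSub_one : sqSub (1 : PowerSeries R) = 1 := by
  ext n
  rcases Nat.even_or_odd n with ⟨k, hk⟩ | ⟨k, hk⟩
  · have hn : n = 2 * k := by omega
    subst hn
    rw [coeff_sqSub_even]
    simp only [PowerSeries.coeff_one]
    by_cases h : k = 0 <;> simp [h]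
  · have hn : n = 2 * k + 1 := by omega
    subst hn
    rw [coeff_sqSub_odd]
    simp [PowerSeries.coeff_one]

/-- Master convolution lemma. -/
lemma coeff_mul_sqSub (U K : PowerSeries R) (n : ℕ) :
    PowerSeries.coeff (R := R) n (U * sqSub K) =
      ∑ b ∈ range (n / 2 + 1),
        PowerSeries.coeff (R := R) (n - 2 * b) U * PowerSeries.coeff (R := R) b K := by
  rw [PowerSeries.coeff_mul]
  rw [← Finset.sum_filter_of_ne (p := fun p : ℕ × ℕ => p.2 % 2 = 0)
    (fun p hp h => by
      by_contra hodd
      apply h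
      obtain ⟨c, hc⟩ : ∃ c, p.2 = 2 * c + 1 := ⟨p.2 / 2, by omega⟩
      rw [hc, coeff_sqSub_odd, mul_zero])]
  refine (Finset.sum_nbij' (i := fun p : ℕ × ℕ => p.2 / 2)
    (j := fun b => (n - 2 * b, 2 * b)) ?_ ?_ ?_ ?_ ?_).symm.symm
  · intro p hp
    simp only [Finset.mem_filter, Finset.HasAntidiagonal.mem_antidiagonal] at hp
    simp only [Finset.mem_range]
    omega
  · intro b hb
    simp only [Finset.mem_range] at hb
    simp only [Finset.mem_filter, Finset.HasAntidiagonal.mem_antidiagonal]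
    omega
  · intro p hp
    simp only [Finset.mem_filter, Finset.HasAntidiagonal.mem_antidiagonal] at hp
    obtain ⟨a, b⟩ := p
    simp only at hp ⊢
    simp only [Prod.mk.injEq]
    constructor <;> omega
  · intro b hb
    simp only [Finset.mem_range] at hb
    simp
  · intro p hp
    simp only [Finset.mem_filter, Finset.HasAntidiagonal.mem_antidiagonal] at hp
    obtain ⟨c, hc⟩ : ∃ c, p.2 = 2 * c := ⟨p.2 / 2, by omega⟩
    rw [hc, coeff_sqSub_even, Nat.mul_div_cancel_left c two_pos]
    have h1 : n - 2 * c = p.1 := by omega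
    rw [h1]

lemma sqSub_mul (f g : PowerSeries R) : sqSub (f * g) = sqSub f * sqSub g := by
  ext n
  rw [coeff_mul_sqSub]
  rcases Nat.even_or_odd n with ⟨k, hk⟩ | ⟨k, hk⟩
  · have hn : n = 2 * k := by omega
    subst hn
    rw [coeff_sqSub_even, PowerSeries.coeff_mul,
      Finset.Nat.sum_antidiagonal_eq_sum_range_succ_mk,
      ← Finset.sum_range_reflect]
    have hd : (2 * k) / 2 = k := by omega
    rw [hd]
    refine Finset.sum_congr rfl fun b hb => ?_
    simp only [Finset.mem_range, Nat.succ_eq_add_one] at hb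
    simp only
    have h1 : k + 1 - 1 - b = k - b := by omega
    rw [h1]
    have h2 : 2 * k - 2 * b = 2 * (k - b) := by omega
    rw [h2, coeff_sqSub_even]
    have h3 : k - (k - b) = b := by omega
    rw [h3]
  · have hn : n = 2 * k + 1 := by omega
    subst hn
    rw [coeff_sqSub_odd]
    have hd : (2 * k + 1) / 2 = k := by omega
    rw [hd]
    refine (Finset.sum_eq_zero fun b hb => ?_).symm
    simp only [Finset.mem_range] at hb
    have h1 : 2 * k + 1 - 2 * b = 2 * (k - b) + 1 := by omega
    rw [h1, coeff_sqSub_odd, zero_mul]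

lemma coeff_mul_sqSub_even (U K : PowerSeries R) (k : ℕ) :
    PowerSeries.coeff (R := R) (2 * k) (U * sqSub K) =
      PowerSeries.coeff (R := R) k (evenPart U * K) := by
  rw [coeff_mul_sqSub, PowerSeries.coeff_mul,
    Finset.Nat.sum_antidiagonal_eq_sum_range_succ_mk,
    ← Finset.sum_range_reflect]
  have hd : (2 * k) / 2 = k := by omega
  rw [hd]
  refine Finset.sum_congr rfl fun b hb => ?_
  simp only [Finset.mem_range] at hb
  simp only [evenPart, PowerSeries.coeff_mk]
  have h1 : k + 1 - 1 - b = k - b := by omega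
  rw [h1]
  have h2 : 2 * k - 2 * (k - b) = 2 * b := by omega
  rw [h2]

lemma coeff_mul_sqSub_odd (U K : PowerSeries R) (k : ℕ) :
    PowerSeries.coeff (R := R) (2 * k + 1) (U * sqSub K) =
      PowerSeries.coeff (R := R) k (oddPart U * K) := by
  rw [coeff_mul_sqSub, PowerSeries.coeff_mul,
    Finset.Nat.sum_antidiagonal_eq_sum_range_succ_mk,
    ← Finset.sum_range_reflect]
  have hd : (2 * k + 1) / 2 = k := by omega
  rw [hd]
  refine Finset.sum_congr rfl fun b hb => ?_
  simp only [Finset.mem_range] at hb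
  simp only [oddPart, PowerSeries.coeff_mk]
  have h1 : k + 1 - 1 - b = k - b := by omega
  rw [h1]
  have h2 : 2 * k + 1 - 2 * (k - b) = 2 * b + 1 := by omega
  rw [h2]

/-- The odd coefficients of `G(x)·G(-x)` vanish. -/
lemma odd_coeff_mul_rescale_neg (G : PowerSeries R) (k : ℕ) :
    PowerSeries.coeff (R := R) (2 * k + 1) (G * PowerSeries.rescale (-1) G) = 0 := by
  rw [PowerSeries.coeff_mul]
  refine Finset.sum_involution (fun p _ => (p.2, p.1)) ?_ ?_ ?_ ?_
  · intro p hp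
    simp only [Finset.HasAntidiagonal.mem_antidiagonal] at hp
    simp only [PowerSeries.coeff_rescale]
    rcases Nat.even_or_odd p.1 with h1 | h1
    · have h2 : Odd p.2 := by
        rcases h1 with ⟨c, hc⟩; exact ⟨k - c, by omega⟩
      rw [h1.neg_one_pow, h2.neg_one_pow]
      ring
    · have h2 : Even p.2 := by
        rcases h1 with ⟨c, hc⟩; exact ⟨k - c, by omega⟩
      rw [h1.neg_one_pow, h2.neg_one_pow]
      ring
  · intro p hp _
    simp only [Finset.HasAntidiagonal.mem_antidiagonal] at hp
    intro h
    have : p.1 = p.2 := congrArg Prod.snd h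
    omega
  · intro p hp
    simp only [Finset.HasAntidiagonal.mem_antidiagonal] at hp ⊢
    omega
  · intro p hp
    rfl

/-- A series whose odd coefficients vanish equals `sqSub` of its even part. -/
lemma eq_sqSub_evenPart (W : PowerSeries R)
    (h : ∀ k, PowerSeries.coeff (R := R) (2 * k + 1) W = 0) :
    W = sqSub (evenPart W) := by
  ext n
  rcases Nat.even_or_odd n with ⟨k, hk⟩ | ⟨k, hk⟩
  · have hn : n = 2 * k := by omega
    subst hn
    rw [coeff_sqSub_even, evenPart, PowerSeries.coeff_mk]
  · have hn : n = 2 * k + 1 := by omega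
    subst hn
    rw [coeff_sqSub_odd, h]

lemma inverse_eq_of_mul_eq_one {W X : R} (h : W * X = 1) : Ring.inverse W = X := by
  have hW : IsUnit W := IsUnit.of_mul_eq_one X h
  calc Ring.inverse W = Ring.inverse W * (W * X) := by rw [h, mul_one]
    _ = (Ring.inverse W * W) * X := by ring
    _ = X := by rw [Ring.inverse_mul_cancel W hW, one_mul]

end Aux

/-- Bivariate Graeffe step for power projection: with
`U(x,y) = P(x,y)Q(-x,y)`, `V(x²,y) = Q(x,y)Q(-x,y)`, and `Q(0,0) = 1`, the projection
`[x^{n-1}](P/Q) mod y^m` equals `[x^{⌈n/2⌉-1}](U_e/V) mod y^m` if `n-1` is even and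
`[x^{⌈n/2⌉-1}](U_o/V) mod y^m` if `n-1` is odd, working in `(A⟦y⟧)⟦x⟧`. -/
theorem bivariate_graeffe_step_projection
    {A : Type*} [CommRing A] (n m : ℕ) (hn : 2 ≤ n)
    (P Q : Polynomial (Polynomial A))
    (h0 : (Q.coeff 0).coeff 0 = 1) :
    ∀ j < m,
      PowerSeries.coeff (R := A) j
          (PowerSeries.coeff (R := PowerSeries A) (n - 1)
            (toSer P * Ring.inverse (toSer Q))) =
        PowerSeries.coeff (R := A) j
          (PowerSeries.coeff (R := PowerSeries A) ((n + 1) / 2 - 1)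
            ((if (n - 1) % 2 = 0 then
                evenPart (toSer P * PowerSeries.rescale (-1) (toSer Q))
              else
                oddPart (toSer P * PowerSeries.rescale (-1) (toSer Q))) *
              Ring.inverse (evenPart (toSer Q * PowerSeries.rescale (-1) (toSer Q))))) := by
  intro j hj
  set R := PowerSeries A
  set F : PowerSeries R := toSer P with hF
  set G : PowerSeries R := toSer Q with hG
  set rG : PowerSeries R := PowerSeries.rescale (-1) G with hrG
  set W : PowerSeries R := G * rG with hW
  set V : PowerSeries R := evenPart W with hV
  set U : PowerSeries R := F * rG with hU
  -- units
  have hG0 : PowerSeries.constantCoeff (R := R) G = ((Q.coeff 0 : Polynomial A) : PowerSeries A) := by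
    rw [hG, toSer, ← PowerSeries.coeff_zero_eq_constantCoeff_apply, PowerSeries.coeff_mk]
  have hG0u : IsUnit (PowerSeries.constantCoeff (R := R) G) := by
    rw [hG0, PowerSeries.isUnit_iff_constantCoeff]
    have : PowerSeries.constantCoeff (R := A) ((Q.coeff 0 : Polynomial A) : PowerSeries A)
        = (Q.coeff 0).coeff 0 := by
      rw [← PowerSeries.coeff_zero_eq_constantCoeff_apply, Polynomial.coeff_coe]
    rw [this, h0]
    exact isUnit_one
  have hGu : IsUnit G := PowerSeries.isUnit_iff_constantCoeff.mpr hG0u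
  have hrG0 : PowerSeries.constantCoeff (R := R) rG = PowerSeries.constantCoeff (R := R) G := by
    rw [hrG, ← PowerSeries.coeff_zero_eq_constantCoeff_apply, PowerSeries.coeff_rescale]
    simp
  have hrGu : IsUnit rG := PowerSeries.isUnit_iff_constantCoeff.mpr (hrG0 ▸ hG0u)
  have hWu : IsUnit W := hGu.mul hrGu
  -- W has vanishing odd coefficients, so W = sqSub V
  have hWodd : ∀ k, PowerSeries.coeff (R := R) (2 * k + 1) W = 0 :=
    fun k => odd_coeff_mul_rescale_neg G k
  have hWsq : W = sqSub V := eq_sqSub_evenPart W hWodd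
  have hVu : IsUnit V := by
    rw [PowerSeries.isUnit_iff_constantCoeff]
    have : PowerSeries.constantCoeff (R := R) V = PowerSeries.constantCoeff (R := R) W := by
      rw [hV, evenPart, ← PowerSeries.coeff_zero_eq_constantCoeff_apply,
        PowerSeries.coeff_mk, mul_zero, PowerSeries.coeff_zero_eq_constantCoeff_apply]
    rw [this]
    exact PowerSeries.isUnit_iff_constantCoeff.mp hWu
  -- inverse W = sqSub (inverse V)
  have hinvW : Ring.inverse W = sqSub (Ring.inverse V) := by
    apply inverse_eq_of_mul_eq_one
    rw [hWsq, ← sqSub_mul, Ring.mul_inverse_cancel V hVu, sqSub_one]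
  -- F * inverse G = U * inverse W
  have hkey : F * Ring.inverse G = U * Ring.inverse W := by
    rw [hW, Ring.mul_inverse_rev, hU]
    calc F * Ring.inverse G
        = F * (rG * Ring.inverse rG) * Ring.inverse G := by
          rw [Ring.mul_inverse_cancel rG hrGu, mul_one]
      _ = F * rG * (Ring.inverse rG * Ring.inverse G) := by ring
  rw [hkey, hinvW]
  -- now split on parity of n - 1
  rcases Nat.even_or_odd (n - 1) with ⟨k, hk⟩ | ⟨k, hk⟩
  · have hmod : (n - 1) % 2 = 0 := by omega
    have hn1 : n - 1 = 2 * k := by omega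
    have hk2 : (n + 1) / 2 - 1 = k := by omega
    rw [if_pos hmod, hn1, hk2, coeff_mul_sqSub_even]
  · have hmod : ¬ (n - 1) % 2 = 0 := by omega
    have hn1 : n - 1 = 2 * k + 1 := by omega
    have hk2 : (n + 1) / 2 - 1 = k := by omega
    rw [if_neg hmod, hn1, hk2, coeff_mul_sqSub_odd]
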